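/- arXiv:1404.7257 — 3 statements merged into one kernel-verified Lean document; each statement's English description precedes it below -/
import Mathlib

section
/- (Structural lemma for the boundary of the bottleneck.) Let Λ = [1,L]^d, let η ∈ A_*, and let z ∈ Λ ∖ {v^*} be such that c_z^{Λ,max}(η) = 1 and η^z ∉ A_*. Then there exist an integer M ≥ 1 and points z = u_0 ≪ u_1 ≪ … ≪ u_M = v^* in Λ such that, setting d_i = ‖u_{i−1} − u_i‖₁, one has 1 = d_1 < d_2 < … < d_M < L and, for every 1 ≤ i ≤ M: (i) Φ_ℓ(η)_{u_i} = Φ_ℓ(η^z)_{u_i} = 0 for all ℓ < d_i; (ii) Φ_{d_i}(η)_{u_i} ≠ Φ_{d_i}(η^z)_{u_i}; (iii) Φ_{d_i−1}(η)_{u_{i−1}} ≠ Φ_{d_i−1}(η^z)_{u_{i−1}}. -/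
open scoped BigOperators

namespace East

/-- Sites of the lattice `ℤ^d`. -/
abbrev Site (d : ℕ) := Fin d → ℤ

/-- The canonical basis vector `e_i` of `ℤ^d`. -/
def basis (d : ℕ) (i : Fin d) : Site d := fun j => if j = i then 1 else 0

/-- Spin configurations on a finite box `Λ ⊂ ℤ^d`: `true` = particle, `false` = vacancy. -/
abbrev Cfg (d : ℕ) (Λ : Finset (Site d)) := {x // x ∈ Λ} → Bool

/-- The weight of a configuration under the product Bernoulli(`1-q`) measure `π_Λ`. -/
noncomputable def weight (d : ℕ) (q : ℝ) {Λ : Finset (Site d)} (η : Cfg d Λ) : ℝ :=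
  ∏ x : {x // x ∈ Λ}, (if η x then 1 - q else q)

/-- Expectation with respect to `π_Λ`. -/
noncomputable def mean (d : ℕ) (q : ℝ) {Λ : Finset (Site d)} (f : Cfg d Λ → ℝ) : ℝ :=
  ∑ η : Cfg d Λ, weight d q η * f η

/-- Conditional expectation of `f` with respect to the spins in `V`,
given the spins outside `V`. -/
noncomputable def condEx (d : ℕ) (q : ℝ) (V : Finset (Site d)) {Λ : Finset (Site d)}
    (f : Cfg d Λ → ℝ) (η : Cfg d Λ) : ℝ :=
  ∑ ξ : Cfg d Λ, weight d q ξ * f (fun x => if (x : Site d) ∈ V then ξ x else η x)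

/-- Conditional variance `Var_V(f)` of `f` with respect to the spins in `V`,
given the spins outside `V`. -/
noncomputable def condVar (d : ℕ) (q : ℝ) (V : Finset (Site d)) {Λ : Finset (Site d)}
    (f : Cfg d Λ → ℝ) (η : Cfg d Λ) : ℝ :=
  condEx d q V (fun ζ => f ζ ^ 2) η - (condEx d q V f η) ^ 2

/-- The (total) variance of `f` under `π_Λ`. -/
noncomputable def variance (d : ℕ) (q : ℝ) {Λ : Finset (Site d)} (f : Cfg d Λ → ℝ) : ℝ :=
  mean d q (fun η => f η ^ 2) - (mean d q f) ^ 2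

/-- The configuration on all of `ℤ^d` agreeing with `η` on `Λ` and with the boundary
condition `σ` outside of `Λ`. -/
def full (d : ℕ) {Λ : Finset (Site d)} (σ : Site d → Bool) (η : Cfg d Λ) (y : Site d) : Bool :=
  if h : y ∈ Λ then η ⟨y, h⟩ else σ y

open Classical in
/-- The East-like constraint indicator `c_x^{Λ,σ}(η)`: it equals `1` iff the configuration
agreeing with `η` on `Λ` and with `σ` outside has a vacancy at `x - e_i` for some `i`. -/
noncomputable def cInd (d : ℕ) {Λ : Finset (Site d)} (σ : Site d → Bool) (x : Site d)
    (η : Cfg d Λ) : ℝ :=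
  if ∃ i : Fin d, full d σ η (x - basis d i) = false then 1 else 0

/-- The Dirichlet form `D_Λ^σ(f) = Σ_{x∈Λ} π_Λ(c_x^{Λ,σ} · Var_x f)` of the East-like
process on `Λ` with boundary condition `σ`. -/
noncomputable def dirichlet (d : ℕ) (q : ℝ) (Λ : Finset (Site d)) (σ : Site d → Bool)
    (f : Cfg d Λ → ℝ) : ℝ :=
  ∑ x ∈ Λ, mean d q (fun η => cInd d σ x η * condVar d q {x} f η)

/-- The spectral gap of the East-like process on `Λ` with boundary condition `σ`. -/
noncomputable def gap (d : ℕ) (q : ℝ) (Λ : Finset (Site d)) (σ : Site d → Bool) : ℝ :=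
  sInf { r : ℝ | ∃ f : Cfg d Λ → ℝ, (∃ η η' : Cfg d Λ, f η ≠ f η') ∧
    r = dirichlet d q Λ σ f / variance d q f }

/-- The relaxation time `T_rel^σ(Λ;q)`, the inverse of the spectral gap. -/
noncomputable def Trel (d : ℕ) (q : ℝ) (Λ : Finset (Site d)) (σ : Site d → Bool) : ℝ :=
  (gap d q Λ σ)⁻¹

/-- The cube `[1,L]^d`. -/
noncomputable def cube (d : ℕ) (L : ℕ) : Finset (Site d) := Finset.Icc (fun _ => 1) (fun _ => (L : ℤ))

/-- The maximal boundary condition: all boundary spins are vacancies. -/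
def maxBC (d : ℕ) : Site d → Bool := fun _ => false

/-- The site `(0,1,…,1) = (1,…,1) - e_1`, carrying the vacancy of the (canonical)
minimal boundary condition for the cube `[1,L]^d`. -/
def minVac (d : ℕ) : Site d := fun j => if (j : ℕ) = 0 then 0 else 1

/-- The minimal boundary condition for the cube `[1,L]^d`: a unique vacancy at
`(1,…,1) - e_1`. -/
def minBC (d : ℕ) : Site d → Bool := fun x => decide (x ≠ minVac d)

/-- `T_rel^max(L;q)`, relaxation time on `[1,L]^d` with maximal boundary conditions. -/
noncomputable def TrelMax (d : ℕ) (q : ℝ) (L : ℕ) : ℝ := Trel d q (cube d L) (maxBC d)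

/-- `T_rel^min(L;q)`, relaxation time on `[1,L]^d` with minimal boundary conditions. -/
noncomputable def TrelMin (d : ℕ) (q : ℝ) (L : ℕ) : ℝ := Trel d q (cube d L) (minBC d)

/-- `θ_q = log₂(1/q)`. -/
noncomputable def theta (q : ℝ) : ℝ := Real.logb 2 (1 / q)

/-- The East boundary `∂_E Λ` of a finite set `Λ ⊂ ℤ^d`. -/
def eastBoundary (d : ℕ) (Λ : Finset (Site d)) : Set (Site d) :=
  {x | x ∉ Λ ∧ ∃ i : Fin d, x + basis d i ∈ Λ}

end East

namespace East

/-- The gap `g_x(η)` of a site `x` in the configuration `η ∈ Ω_{[1,L]^d}` extended by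
zeros on `∂_E Λ`: the least `g > 0` such that some `z ∈ Λ ∪ ∂_E Λ` with `z ≪ x`,
`‖x - z‖₁ = g` carries a vacancy. -/
noncomputable def gapOf (d L : ℕ) (η : Cfg d (cube d L)) (x : Site d) : ℕ :=
  sInf { g : ℕ | 0 < g ∧ ∃ z : Site d,
    (z ∈ cube d L ∨ z ∈ eastBoundary d (cube d L)) ∧ z ≤ x ∧
    full d (maxBC d) η z = false ∧ (∑ i, (x i - z i).natAbs) = g }

/-- One stage of the deterministic dynamics: remove all vacancies with gap `g`. -/
noncomputable def phiStep (d L : ℕ) (g : ℕ) (η : Cfg d (cube d L)) : Cfg d (cube d L) :=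
  fun y => if gapOf d L η (y : Site d) = g then true else η y

/-- The deterministic dynamics `Φ_g`. -/
noncomputable def Phi (d L : ℕ) : ℕ → Cfg d (cube d L) → Cfg d (cube d L)
  | 0, η => η
  | g + 1, η => phiStep d L (g + 1) (Phi d L g η)

/-- The upper corner `v^* = (L,…,L)` of `[1,L]^d`. -/
def vstar (d L : ℕ) : Site d := fun _ => (L : ℤ)

/-- The configuration `𝟙0` with a unique vacancy, at `v^*`. -/
def oneZero (d L : ℕ) : Cfg d (cube d L) :=
  fun y => decide ((y : Site d) ≠ vstar d L)

/-- The bottleneck set `A_* = { η : Φ_{L-1}(η) = 𝟙0 }`. -/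
noncomputable def Astar (d L : ℕ) : Set (Cfg d (cube d L)) :=
  { η | Phi d L (L - 1) η = oneZero d L }

/-- The configuration `η` with the spin at `z` flipped. -/
def flipAt (d : ℕ) {Λ : Finset (Site d)} (η : Cfg d Λ) (z : Site d) : Cfg d Λ :=
  fun y => if (y : Site d) = z then !(η y) else η y

end East

namespace East


section Aux

variable {d L : ℕ}

lemma mem_cube_iff {x : Site d} : x ∈ cube d L ↔ ∀ j, 1 ≤ x j ∧ x j ≤ (L : ℤ) := by
  simp [cube, Finset.mem_Icc, Pi.le_def, forall_and]

lemma full_of_mem {Λ : Finset (Site d)} (σ : Site d → Bool) (ζ : Cfg d Λ) {y : Site d}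
    (h : y ∈ Λ) : full d σ ζ y = ζ ⟨y, h⟩ := dif_pos h

lemma full_of_not_mem {Λ : Finset (Site d)} (σ : Site d → Bool) (ζ : Cfg d Λ) {y : Site d}
    (h : y ∉ Λ) : full d σ ζ y = σ y := dif_neg h

/-- The defining set of `gapOf`. -/
def gapSet (d L : ℕ) (ζ : Cfg d (cube d L)) (x : Site d) : Set ℕ :=
  { g : ℕ | 0 < g ∧ ∃ w : Site d,
    (w ∈ cube d L ∨ w ∈ eastBoundary d (cube d L)) ∧ w ≤ x ∧
    full d (maxBC d) ζ w = false ∧ (∑ i, (x i - w i).natAbs) = g }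

lemma gapOf_def (ζ : Cfg d (cube d L)) (x : Site d) : gapOf d L ζ x = sInf (gapSet d L ζ x) := rfl

lemma coord_mem_gapSet (hL : 1 ≤ L) (ζ : Cfg d (cube d L)) {x : Site d}
    (hx : x ∈ cube d L) (i : Fin d) : (x i).natAbs ∈ gapSet d L ζ x := by
  rw [mem_cube_iff] at hx
  have hxi := hx i
  refine ⟨by omega, (fun j => if j = i then 0 else x j), Or.inr ⟨?_, i, ?_⟩, ?_, ?_, ?_⟩
  · intro hmem
    have := (mem_cube_iff.mp hmem i).1
    simp at this
  · rw [mem_cube_iff]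
    intro j
    by_cases hj : j = i <;> simp [hj, basis, Pi.add_apply]
    · omega
    · have := hx j; omega
  · intro j
    by_cases hj : j = i <;> simp [hj]
    omega
  · exact full_of_not_mem _ _ (by
      intro hmem
      have := (mem_cube_iff.mp hmem i).1
      simp at this)
  · rw [Finset.sum_eq_single i]
    · simp
    · intro b _ hb; simp [hb]
    · simp

lemma gapSet_nonempty (hL : 1 ≤ L) (ζ : Cfg d (cube d L)) {x : Site d}
    (hx : x ∈ cube d L) (i : Fin d) : (gapSet d L ζ x).Nonempty :=
  ⟨_, coord_mem_gapSet hL ζ hx i⟩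

lemma gapOf_mem (hL : 1 ≤ L) (hd : 1 ≤ d) (ζ : Cfg d (cube d L)) {x : Site d}
    (hx : x ∈ cube d L) : gapOf d L ζ x ∈ gapSet d L ζ x :=
  Nat.sInf_mem (gapSet_nonempty hL ζ hx ⟨0, hd⟩)

lemma gapOf_pos (hL : 1 ≤ L) (hd : 1 ≤ d) (ζ : Cfg d (cube d L)) {x : Site d}
    (hx : x ∈ cube d L) : 0 < gapOf d L ζ x :=
  (gapOf_mem hL hd ζ hx).1

lemma gapOf_le_coord (hL : 1 ≤ L) (ζ : Cfg d (cube d L)) {x : Site d}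
    (hx : x ∈ cube d L) (i : Fin d) : gapOf d L ζ x ≤ (x i).natAbs :=
  Nat.sInf_le (coord_mem_gapSet hL ζ hx i)

lemma full_phiStep_false {g : ℕ} {ζ : Cfg d (cube d L)} {y : Site d}
    (h : full d (maxBC d) (phiStep d L g ζ) y = false) : full d (maxBC d) ζ y = false := by
  by_cases hy : y ∈ cube d L
  · rw [full_of_mem _ _ hy] at h ⊢
    simp only [phiStep] at h
    split at h
    · exact absurd h (by simp)
    · exact h
  · rwa [full_of_not_mem _ _ hy] at h ⊢

lemma full_phiStep_true {g : ℕ} {ζ : Cfg d (cube d L)} {y : Site d}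
    (h : full d (maxBC d) ζ y = true) : full d (maxBC d) (phiStep d L g ζ) y = true := by
  by_cases hfalse : full d (maxBC d) (phiStep d L g ζ) y = false
  · rw [full_phiStep_false hfalse] at h; exact absurd h (by simp)
  · simpa using hfalse

lemma gapOf_mono_step (hL : 1 ≤ L) (hd : 1 ≤ d) {g : ℕ} (ζ : Cfg d (cube d L)) {x : Site d}
    (hx : x ∈ cube d L) : gapOf d L ζ x ≤ gapOf d L (phiStep d L g ζ) x := by
  apply Nat.sInf_le
  obtain ⟨h1, w, h2, h3, h4, h5⟩ := gapOf_mem hL hd (phiStep d L g ζ) hx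
  exact ⟨h1, w, h2, h3, full_phiStep_false h4, h5⟩

lemma Phi_false_mono {ζ : Cfg d (cube d L)} {y : Site d} {m n : ℕ} (h : m ≤ n)
    (hf : full d (maxBC d) (Phi d L n ζ) y = false) :
    full d (maxBC d) (Phi d L m ζ) y = false := by
  induction n with
  | zero => exact Nat.le_zero.mp h ▸ hf
  | succ n ih =>
    rcases Nat.lt_or_ge m (n+1) with hm | hm
    · exact ih (Nat.lt_succ_iff.mp hm) (full_phiStep_false hf)
    · have : m = n + 1 := le_antisymm h hm
      exact this ▸ hf

lemma Phi_true_mono {ζ : Cfg d (cube d L)} {y : Site d} {m n : ℕ} (h : m ≤ n)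
    (ht : full d (maxBC d) (Phi d L m ζ) y = true) :
    full d (maxBC d) (Phi d L n ζ) y = true := by
  by_cases hf : full d (maxBC d) (Phi d L n ζ) y = false
  · rw [Phi_false_mono h hf] at ht; exact absurd ht (by simp)
  · simpa using hf

lemma invariant (hL : 1 ≤ L) (hd : 1 ≤ d) (ζ : Cfg d (cube d L)) :
    ∀ (m : ℕ) {x : Site d}, x ∈ cube d L →
      full d (maxBC d) (Phi d L m ζ) x = false → m < gapOf d L (Phi d L m ζ) x := by
  intro m
  induction m with
  | zero => intro x hx _; exact gapOf_pos hL hd ζ hx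
  | succ m ih =>
    intro x hx hf
    have hstep : Phi d L (m+1) ζ = phiStep d L (m+1) (Phi d L m ζ) := rfl
    have hfx : full d (maxBC d) (Phi d L m ζ) x = false := full_phiStep_false (hstep ▸ hf)
    have hne : gapOf d L (Phi d L m ζ) x ≠ m + 1 := by
      intro hcontra
      rw [hstep, full_of_mem _ _ hx] at hf
      simp only [phiStep, hcontra] at hf
      simp at hf
    have h1 := ih hx hfx
    have h2 := gapOf_mono_step hL hd (g := m+1) (Phi d L m ζ) hx
    rw [hstep]
    omega

lemma diff_mem_cube {ζ₁ ζ₂ : Cfg d (cube d L)} {y : Site d}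
    (h : full d (maxBC d) ζ₁ y ≠ full d (maxBC d) ζ₂ y) : y ∈ cube d L := by
  by_contra hy
  rw [full_of_not_mem _ _ hy, full_of_not_mem _ _ hy] at h
  exact h rfl

lemma cause_aux (hL : 1 ≤ L) (hd : 1 ≤ d) {ζ₁ ζ₂ : Cfg d (cube d L)} {x : Site d} {s : ℕ}
    (hx : x ∈ cube d L)
    (h2 : full d (maxBC d) (Phi d L s ζ₂) x = false)
    (hg1 : gapOf d L (Phi d L s ζ₁) x = s + 1)
    (hg2 : gapOf d L (Phi d L s ζ₂) x ≠ s + 1) :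
    ∃ w : Site d, w ∈ cube d L ∧ w ≤ x ∧ (∑ i, (x i - w i).natAbs) = s + 1 ∧
      full d (maxBC d) (Phi d L s ζ₁) w ≠ full d (maxBC d) (Phi d L s ζ₂) w := by
  obtain ⟨_, w, hw1, hw2, hw3, hw4⟩ := hg1 ▸ gapOf_mem hL hd (Phi d L s ζ₁) hx
  have hw2' : full d (maxBC d) (Phi d L s ζ₂) w = true := by
    by_contra hcon
    have hwf : full d (maxBC d) (Phi d L s ζ₂) w = false := by simpa using hcon
    have hmem : s + 1 ∈ gapSet d L (Phi d L s ζ₂) x := ⟨Nat.succ_pos s, w, hw1, hw2, hwf, hw4⟩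
    have hinv := invariant hL hd ζ₂ s hx h2
    have := Nat.sInf_le hmem
    rw [← gapOf_def] at this
    omega
  have hne : full d (maxBC d) (Phi d L s ζ₁) w ≠ full d (maxBC d) (Phi d L s ζ₂) w := by
    rw [hw3, hw2']; simp
  exact ⟨w, diff_mem_cube hne, hw2, hw4, hne⟩

lemma cause (hL : 1 ≤ L) (hd : 1 ≤ d) {ζ₁ ζ₂ : Cfg d (cube d L)} {x : Site d} {s : ℕ}
    (hx : x ∈ cube d L)
    (h1 : full d (maxBC d) (Phi d L s ζ₁) x = false)
    (h2 : full d (maxBC d) (Phi d L s ζ₂) x = false)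
    (hne : full d (maxBC d) (Phi d L (s+1) ζ₁) x ≠ full d (maxBC d) (Phi d L (s+1) ζ₂) x) :
    ∃ w : Site d, w ∈ cube d L ∧ w ≤ x ∧ (∑ i, (x i - w i).natAbs) = s + 1 ∧
      full d (maxBC d) (Phi d L s ζ₁) w ≠ full d (maxBC d) (Phi d L s ζ₂) w := by
  have hval : ∀ ζ : Cfg d (cube d L), full d (maxBC d) (Phi d L s ζ) x = false →
      full d (maxBC d) (Phi d L (s+1) ζ) x =
        (if gapOf d L (Phi d L s ζ) x = s + 1 then true else false) := by
    intro ζ hζ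
    have hstep : Phi d L (s+1) ζ = phiStep d L (s+1) (Phi d L s ζ) := rfl
    rw [hstep, full_of_mem _ _ hx]
    simp only [phiStep]
    rw [full_of_mem _ _ hx] at hζ
    rw [hζ]
  rw [hval ζ₁ h1, hval ζ₂ h2] at hne
  by_cases hc1 : gapOf d L (Phi d L s ζ₁) x = s + 1
  · have hc2 : gapOf d L (Phi d L s ζ₂) x ≠ s + 1 := by
      intro h; rw [hc1, h] at hne; exact hne rfl
    exact cause_aux hL hd hx h2 hc1 hc2
  · have hc2 : gapOf d L (Phi d L s ζ₂) x = s + 1 := by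
      by_contra h; simp [hc1, h] at hne
    obtain ⟨w, hw1, hw2, hw3, hw4⟩ := cause_aux hL hd hx h1 hc2 hc1
    exact ⟨w, hw1, hw2, hw3, hw4.symm⟩

end Aux


section Aux2

variable {d L : ℕ}

lemma Phi_zero (ζ : Cfg d (cube d L)) : Phi d L 0 ζ = ζ := rfl

lemma full_flipAt_ne {Λ : Finset (Site d)} (σ : Site d → Bool) (η : Cfg d Λ) {z y : Site d}
    (hy : y ≠ z) : full d σ (flipAt d η z) y = full d σ η y := by
  by_cases h : y ∈ Λ
  · rw [full_of_mem _ _ h, full_of_mem _ _ h]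
    simp [flipAt, hy]
  · rw [full_of_not_mem _ _ h, full_of_not_mem _ _ h]

lemma full_flipAt_self {Λ : Finset (Site d)} (σ : Site d → Bool) (η : Cfg d Λ) {z : Site d}
    (hz : z ∈ Λ) : full d σ (flipAt d η z) z ≠ full d σ η z := by
  rw [full_of_mem _ _ hz, full_of_mem _ _ hz]
  simp [flipAt]

lemma z_stays_true (hL : 1 ≤ L) (hd : 1 ≤ d) {η : Cfg d (cube d L)} {z : Site d}
    (hz : z ∈ cube d L) (hc : cInd d (maxBC d) z η = 1)
    (ζ : Cfg d (cube d L)) (hζ : ∀ y : Site d, y ≠ z →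
      full d (maxBC d) ζ y = full d (maxBC d) η y) :
    ∀ ℓ, 1 ≤ ℓ → full d (maxBC d) (Phi d L ℓ ζ) z = true := by
  have hex : ∃ i : Fin d, full d (maxBC d) η (z - basis d i) = false := by
    by_contra h
    simp only [cInd, h, if_false] at hc
    norm_num at hc
  obtain ⟨i, hi⟩ := hex
  have hwz : z - basis d i ≠ z := by
    intro h
    have := congrFun h i
    simp [basis, Pi.sub_apply] at this
  have hmem1 : (1 : ℕ) ∈ gapSet d L ζ z := by
    refine ⟨one_pos, z - basis d i, ?_, ?_, ?_, ?_⟩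
    · by_cases h : z - basis d i ∈ cube d L
      · exact Or.inl h
      · exact Or.inr ⟨h, i, by simpa using hz⟩
    · intro j
      by_cases hj : j = i <;> simp [hj, basis, Pi.sub_apply]
    · rw [hζ _ hwz]; exact hi
    · rw [Finset.sum_eq_single i]
      · simp [basis, Pi.sub_apply]
      · intro b _ hb; simp [basis, Pi.sub_apply, hb]
      · simp
  have hgap : gapOf d L ζ z = 1 := by
    have h1 := Nat.sInf_le hmem1
    have h2 := gapOf_pos hL hd ζ hz
    rw [gapOf_def] at h2 ⊢
    omega
  have h1 : full d (maxBC d) (Phi d L 1 ζ) z = true := by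
    have hstep : Phi d L 1 ζ = phiStep d L 1 (Phi d L 0 ζ) := rfl
    rw [hstep, Phi_zero, full_of_mem _ _ hz]
    simp [phiStep, hgap]
  intro ℓ hℓ
  exact Phi_true_mono hℓ h1

lemma chain_lemma (hL : 1 ≤ L) (hd : 1 ≤ d) (η : Cfg d (cube d L)) (z : Site d)
    (hz : z ∈ cube d L) (hc : cInd d (maxBC d) z η = 1) :
    ∀ t : ℕ, ∀ x : Site d, x ∈ cube d L → x ≠ z →
      full d (maxBC d) (Phi d L t η) x ≠ full d (maxBC d) (Phi d L t (flipAt d η z)) x →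
      ∃ (M : ℕ) (u : ℕ → Site d), 1 ≤ M ∧ u 0 = z ∧ u M = x ∧
        (∀ i ≤ M, u i ∈ cube d L) ∧
        (∀ i < M, u i ≤ u (i + 1)) ∧
        (∑ j, (u 1 j - u 0 j).natAbs) = 1 ∧
        (∀ i, 1 ≤ i → i < M →
          (∑ j, (u i j - u (i - 1) j).natAbs) < ∑ j, (u (i + 1) j - u i j).natAbs) ∧
        (∑ j, (u M j - u (M - 1) j).natAbs) ≤ t ∧
        (∀ i, 1 ≤ i → i ≤ M →
          (∀ l < ∑ j, (u i j - u (i - 1) j).natAbs,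
            full d (maxBC d) (Phi d L l η) (u i) = false ∧
            full d (maxBC d) (Phi d L l (flipAt d η z)) (u i) = false) ∧
          full d (maxBC d) (Phi d L (∑ j, (u i j - u (i - 1) j).natAbs) η) (u i) ≠
            full d (maxBC d)
              (Phi d L (∑ j, (u i j - u (i - 1) j).natAbs) (flipAt d η z)) (u i) ∧
          full d (maxBC d)
              (Phi d L ((∑ j, (u i j - u (i - 1) j).natAbs) - 1) η) (u (i - 1)) ≠
            full d (maxBC d)
              (Phi d L ((∑ j, (u i j - u (i - 1) j).natAbs) - 1) (flipAt d η z))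
              (u (i - 1))) := by
  set ξ := flipAt d η z with hξdef
  intro t
  induction t using Nat.strong_induction_on with
  | _ t IH =>
  intro x hx hxz hdiff
  set T := {ℓ : ℕ | full d (maxBC d) (Phi d L ℓ η) x ≠ full d (maxBC d) (Phi d L ℓ ξ) x}
    with hTdef
  have hTne : T.Nonempty := ⟨t, hdiff⟩
  have ht₀T : sInf T ∈ T := Nat.sInf_mem hTne
  have ht₀t : sInf T ≤ t := Nat.sInf_le hdiff
  have ht₀pos : sInf T ≠ 0 := by
    intro h
    rw [h] at ht₀T
    have : full d (maxBC d) (Phi d L 0 η) x ≠ full d (maxBC d) (Phi d L 0 ξ) x := ht₀T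
    rw [Phi_zero, Phi_zero, hξdef, full_flipAt_ne _ _ hxz] at this
    exact this rfl
  obtain ⟨s, hst⟩ : ∃ s, sInf T = s + 1 := ⟨sInf T - 1, by omega⟩
  have hs_not : s ∉ T := Nat.notMem_of_lt_sInf (by omega)
  have heq : full d (maxBC d) (Phi d L s η) x = full d (maxBC d) (Phi d L s ξ) x :=
    not_ne_iff.mp hs_not
  rw [hst] at ht₀T
  have hdiffs : full d (maxBC d) (Phi d L (s+1) η) x ≠
      full d (maxBC d) (Phi d L (s+1) ξ) x := ht₀T
  have hfalse : full d (maxBC d) (Phi d L s η) x = false := by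
    by_contra h
    have h' : full d (maxBC d) (Phi d L s η) x = true := by simpa using h
    have h2' : full d (maxBC d) (Phi d L s ξ) x = true := heq ▸ h'
    have e1 := Phi_true_mono (Nat.le_succ s) h'
    have e2 := Phi_true_mono (Nat.le_succ s) h2'
    rw [e1, e2] at hdiffs
    exact hdiffs rfl
  have hfalse2 : full d (maxBC d) (Phi d L s ξ) x = false := heq ▸ hfalse
  have hbelow : ∀ l ≤ s, full d (maxBC d) (Phi d L l η) x = false ∧
      full d (maxBC d) (Phi d L l ξ) x = false :=
    fun l hl => ⟨Phi_false_mono hl hfalse, Phi_false_mono hl hfalse2⟩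
  obtain ⟨w, hw1, hw2, hw3, hw4⟩ := cause hL hd hx hfalse hfalse2 hdiffs
  rcases Nat.eq_zero_or_pos s with hs0 | hspos
  · -- base case : t₀ = 1, w = z
    subst hs0
    have hwz : w = z := by
      by_contra hne
      rw [Phi_zero, Phi_zero, hξdef, full_flipAt_ne _ _ hne] at hw4
      exact hw4 rfl
    rw [hwz] at hw2 hw3 hw4
    refine ⟨1, fun n => if n = 0 then z else x, le_refl 1, by simp, by simp, ?_, ?_, ?_, ?_,
      ?_, ?_⟩
    · intro i hi
      by_cases h : i = 0 <;> simp [h, hz, hx]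
    · intro i hi
      interval_cases i
      simpa using hw2
    · simpa using hw3
    · intro i h1 h2; omega
    · have h2 : (∑ j, (x j - z j).natAbs) ≤ t := by omega
      simpa using h2
    · intro i hi1 hi2
      have hi : i = 1 := le_antisymm hi2 hi1
      subst hi
      simp only [if_pos rfl, one_ne_zero, if_neg, Nat.sub_self]
      norm_num
      rw [hw3]
      refine ⟨?_, ?_, ?_⟩
      · intro l hl
        have : l = 0 := by omega
        subst this
        exact hbelow 0 (le_refl 0)
      · exact hdiffs
      · rw [Phi_zero, Phi_zero]
        exact fun h => (full_flipAt_self (maxBC d) η hz) (hξdef ▸ h.symm)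
  · -- inductive case : s ≥ 1
    have hwz : w ≠ z := by
      intro h
      subst h
      have e1 := z_stays_true hL hd hz hc η (fun y _ => rfl) s hspos
      have e2 := z_stays_true hL hd hz hc ξ
        (fun y hy => by rw [hξdef, full_flipAt_ne _ _ hy]) s hspos
      rw [e1, e2] at hw4
      exact hw4 rfl
    have hslt : s < t := by omega
    obtain ⟨M, u, hM, hu0, huM, humem, humono, hd1, hstrict, hdM, hpack⟩ :=
      IH s hslt w hw1 hwz hw4
    refine ⟨M + 1, fun n => if n ≤ M then u n else x, by omega, ?_, ?_, ?_, ?_, ?_, ?_, ?_, ?_⟩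
    · simp [hu0]
    · show (if M + 1 ≤ M then u (M+1) else x) = x
      exact if_neg (by omega)
    · intro i hi
      by_cases h : i ≤ M
      · simpa [h] using humem i h
      · simpa [h] using hx
    · intro i hi
      by_cases h : i + 1 ≤ M
      · have h' : i ≤ M := by omega
        simpa [h, h'] using humono i (by omega)
      · have h' : i ≤ M := by omega
        have h'' : i = M := by omega
        subst h''
        simpa [h, h', huM] using hw2
    · have h0 : (0 : ℕ) ≤ M := by omega
      have h1 : (1 : ℕ) ≤ M := hM
      simpa [h0, h1] using hd1
    · intro i hi1 hi2
      by_cases h : i < M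
      · have e1 : i ≤ M := by omega
        have e2 : i - 1 ≤ M := by omega
        have e3 : i + 1 ≤ M := by omega
        simpa [e1, e2, e3] using hstrict i hi1 h
      · have e1 : i ≤ M := by omega
        have e2 : i - 1 ≤ M := by omega
        have e3 : ¬ (i + 1 ≤ M) := by omega
        have hiM : i = M := by omega
        have hdM' : (∑ j, (u i j - u (i - 1) j).natAbs) ≤ s := by rw [hiM]; exact hdM
        have hr : (∑ j, (x j - u i j).natAbs) = s + 1 := by
          rw [hiM]; simp only [huM]; exact hw3
        simp only [if_pos e1, if_pos e2, if_neg e3]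
        omega
    · have e1 : ¬ (M + 1 ≤ M) := by omega
      have hr : (∑ j, (x j - u M j).natAbs) = s + 1 := by simp only [huM]; exact hw3
      simp only [if_neg e1, Nat.add_sub_cancel, if_pos (le_refl M)]
      omega
    · intro i hi1 hi2
      by_cases h : i ≤ M
      · have e2 : i - 1 ≤ M := by omega
        simpa [h, e2] using hpack i hi1 h
      · have hiM : i = M + 1 := by omega
        have e1 : ¬ (M + 1 ≤ M) := by omega
        subst hiM
        simp only [if_neg e1, Nat.add_sub_cancel, if_pos (le_refl M), huM, hw3]
        exact ⟨fun l hl => hbelow l (by omega), hdiffs, hw4⟩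

lemma terminal (hL : 1 ≤ L) (hd : 1 ≤ d) (ζ : Cfg d (cube d L)) {x : Site d}
    (hx : x ∈ cube d L) (hf : full d (maxBC d) (Phi d L (L - 1) ζ) x = false) :
    x = vstar d L := by
  have hinv := invariant hL hd ζ (L - 1) hx hf
  funext j
  have hle := gapOf_le_coord hL (Phi d L (L - 1) ζ) hx j
  have hxj := (mem_cube_iff.mp hx) j
  show x j = (L : ℤ)
  omega

end Aux2

/-- **structural lemma for the boundary of the bottleneck.** If
`η ∈ A_*`, `z ∈ Λ ∖ {v^*}`, `c_z^{Λ,max}(η) = 1` and `η^z ∉ A_*`, then there is a chain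
`z = u_0 ≪ u_1 ≪ … ≪ u_M = v^*` in `Λ`, `M ≥ 1`, whose consecutive `ℓ¹`-distances
`d_i = ‖u_{i-1} - u_i‖₁` satisfy `1 = d_1 < d_2 < … < d_M < L` and, for `1 ≤ i ≤ M`:
(i) `Φ_ℓ(η)_{u_i} = Φ_ℓ(η^z)_{u_i} = 0` for `ℓ < d_i`;
(ii) `Φ_{d_i}(η)_{u_i} ≠ Φ_{d_i}(η^z)_{u_i}`;
(iii) `Φ_{d_i-1}(η)_{u_{i-1}} ≠ Φ_{d_i-1}(η^z)_{u_{i-1}}`. -/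
theorem east_bottleneck_structure (d L : ℕ) (hd : 1 ≤ d) (hL : 1 ≤ L)
    (η : Cfg d (cube d L)) (hη : η ∈ Astar d L)
    (z : Site d) (hz : z ∈ cube d L) (hzv : z ≠ vstar d L)
    (hc : cInd d (maxBC d) z η = 1)
    (hflip : flipAt d η z ∉ Astar d L) :
    ∃ (M : ℕ) (u : ℕ → Site d), 1 ≤ M ∧ u 0 = z ∧ u M = vstar d L ∧
      (∀ i ≤ M, u i ∈ cube d L) ∧
      (∀ i < M, u i ≤ u (i + 1)) ∧
      (∑ j, (u 1 j - u 0 j).natAbs) = 1 ∧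
      (∀ i, 1 ≤ i → i < M →
        (∑ j, (u i j - u (i - 1) j).natAbs) < ∑ j, (u (i + 1) j - u i j).natAbs) ∧
      (∑ j, (u M j - u (M - 1) j).natAbs) < L ∧
      (∀ i, 1 ≤ i → i ≤ M →
        (∀ l < ∑ j, (u i j - u (i - 1) j).natAbs,
          full d (maxBC d) (Phi d L l η) (u i) = false ∧
          full d (maxBC d) (Phi d L l (flipAt d η z)) (u i) = false) ∧
        full d (maxBC d) (Phi d L (∑ j, (u i j - u (i - 1) j).natAbs) η) (u i) ≠
          full d (maxBC d)
            (Phi d L (∑ j, (u i j - u (i - 1) j).natAbs) (flipAt d η z)) (u i) ∧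
        full d (maxBC d)
            (Phi d L ((∑ j, (u i j - u (i - 1) j).natAbs) - 1) η) (u (i - 1)) ≠
          full d (maxBC d)
            (Phi d L ((∑ j, (u i j - u (i - 1) j).natAbs) - 1) (flipAt d η z))
            (u (i - 1))) := by
  have hv : vstar d L ∈ cube d L := by
    rw [mem_cube_iff]
    intro j
    show 1 ≤ (L : ℤ) ∧ (L : ℤ) ≤ (L : ℤ)
    exact ⟨by exact_mod_cast hL, le_refl _⟩
  have hfη : full d (maxBC d) (Phi d L (L - 1) η) (vstar d L) = false := by
    rw [full_of_mem _ _ hv, hη]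
    simp [oneZero]
  have hfξ : full d (maxBC d) (Phi d L (L - 1) (flipAt d η z)) (vstar d L) = true := by
    by_contra h
    have hff : full d (maxBC d) (Phi d L (L - 1) (flipAt d η z)) (vstar d L) = false := by
      simpa using h
    apply hflip
    show Phi d L (L - 1) (flipAt d η z) = oneZero d L
    funext y
    obtain ⟨ys, hy⟩ := y
    by_cases hyv : ys = vstar d L
    · subst hyv
      rw [full_of_mem _ _ hv] at hff
      rw [hff]
      simp [oneZero]
    · have : full d (maxBC d) (Phi d L (L - 1) (flipAt d η z)) ys = true := by
        by_contra h2
        have h2' : full d (maxBC d) (Phi d L (L - 1) (flipAt d η z)) ys = false := by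
          simpa using h2
        exact hyv (terminal hL hd _ hy h2')
      rw [full_of_mem _ _ hy] at this
      rw [this]
      simp [oneZero, hyv]
  have hdiff : full d (maxBC d) (Phi d L (L - 1) η) (vstar d L) ≠
      full d (maxBC d) (Phi d L (L - 1) (flipAt d η z)) (vstar d L) := by
    rw [hfη, hfξ]; simp
  obtain ⟨M, u, h1, h2, h3, h4, h5, h6, h7, h8, h9⟩ :=
    chain_lemma hL hd η z hz hc (L - 1) (vstar d L) hv (Ne.symm hzv) hdiff
  exact ⟨M, u, h1, h2, h3, h4, h5, h6, h7, by omega, h9⟩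

end East
end

section
/- (Entropy bound for the bottleneck counting.) For all integers d ≥ 1 and n ≥ 1, with the convention 0⁰ = 1: Σ_{(x_1,…,x_{n+1}) ∈ U(n+1)} (x_1·x_2·⋯·x_{n+1})^{d−1} ≤ 2^{ d( n(n+1)/2 + n ) } / ( n! · dⁿ ). -/
open scoped BigOperators

/-- Binomial-type estimate: `(e+1)·m^e + m^(e+1) ≤ (m+1)^(e+1)`. -/
lemma east_aux_B0 (e m : ℕ) : (e+1) * m^e + m^(e+1) ≤ (m+1)^(e+1) := by
  induction e with
  | zero => simp; omega
  | succ e ih =>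
    have h : ((e+1) * m^e + m^(e+1)) * (m+1) ≤ (m+1)^(e+1) * (m+1) :=
      Nat.mul_le_mul_right _ ih
    calc (e+1+1) * m^(e+1) + m^(e+1+1)
        ≤ ((e+1) * m^e + m^(e+1)) * (m+1) := by ring_nf; nlinarith [Nat.zero_le (m^e)]
      _ ≤ (m+1)^(e+1) * (m+1) := h
      _ = (m+1)^(e+1+1) := by ring

/-- Telescoping power-sum estimate in `ℕ`. -/
lemma east_aux_BB (e M : ℕ) : ∀ S : ℕ,
    (e+1) * (∑ x ∈ Finset.range (S+1), (M+x)^e) + M^(e+1) ≤ (M+S+1)^(e+1) := by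
  intro S
  induction S with
  | zero => simpa using east_aux_B0 e M
  | succ S ih =>
    rw [Finset.sum_range_succ, show M + (S+1) = M + S + 1 from by omega, Nat.mul_add]
    have h2 := east_aux_B0 e (M+S+1)
    have h3 : (M+(S+1)+1)^(e+1) = (M+S+1+1)^(e+1) := by ring_nf
    omega

/-- Real version of the key sum estimate. -/
lemma east_aux_CC (e S : ℕ) : (∑ x ∈ Finset.range (S+1), ((S:ℝ)+1+x)^e)
    ≤ (2*((S:ℝ)+1))^(e+1) / ((e:ℝ)+1) := by
  have h := east_aux_BB e (S+1) S
  have hc := (Nat.cast_le (α := ℝ)).mpr h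
  push_cast at hc
  have h2 : ((S:ℝ)+1+S+1)^(e+1) = (2*((S:ℝ)+1))^(e+1) := by ring_nf
  rw [le_div_iff₀ (by positivity : (0:ℝ) < (e:ℝ)+1)]
  nlinarith [hc, h2, pow_nonneg (by positivity : (0:ℝ) ≤ (S:ℝ)+1) (e+1)]

/-- The full "choice tree" sum for the bottleneck counting. -/
noncomputable def eastG (d : ℕ) : ℕ → ℕ → ℝ
  | 0, _ => 1
  | k+1, S => ∑ x ∈ Finset.range (S+1), (x:ℝ)^(d-1) * eastG d k (S+x)

/-- The product constant. -/
noncomputable def eastC (d k : ℕ) : ℝ :=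
  ∏ j ∈ Finset.range k, ((2:ℝ)^(d*(j+1)) / (d*(j+1)))

lemma eastC_nonneg (d k : ℕ) : 0 ≤ eastC d k :=
  Finset.prod_nonneg fun j _ => by positivity

/-- Main estimate on the choice-tree sum. -/
lemma eastG_le (d : ℕ) (hd : 1 ≤ d) : ∀ (k S : ℕ),
    eastG d k S ≤ eastC d k * ((S:ℝ)+1)^(d*k) := by
  intro k
  induction k with
  | zero => intro S; simp [eastG, eastC]
  | succ k ih =>
    intro S
    have step1 : eastG d (k+1) S ≤ ∑ x ∈ Finset.range (S+1),
        (x:ℝ)^(d-1) * (eastC d k * ((S:ℝ)+x+1)^(d*k)) := by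
      rw [eastG]
      apply Finset.sum_le_sum
      intro x hx
      have hxp : (0:ℝ) ≤ (x:ℝ)^(d-1) := by positivity
      have := ih (S+x)
      have hcast : (((S+x : ℕ)):ℝ) + 1 = (S:ℝ)+x+1 := by push_cast; ring
      rw [hcast] at this
      exact mul_le_mul_of_nonneg_left this hxp
    have step2 : ∑ x ∈ Finset.range (S+1), (x:ℝ)^(d-1) * (eastC d k * ((S:ℝ)+x+1)^(d*k))
        ≤ eastC d k * ((2*((S:ℝ)+1))^(d*(k+1)) / (d*(k+1))) := by
      have hsum : ∑ x ∈ Finset.range (S+1), (x:ℝ)^(d-1) * ((S:ℝ)+x+1)^(d*k)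
          ≤ (2*((S:ℝ)+1))^(d*(k+1)) / (d*(k+1)) := by
        have e1 : d - 1 + d*k + 1 = d*(k+1) := by
          cases d with | zero => omega | succ d => ring_nf; omega
        have hterm : ∀ x ∈ Finset.range (S+1),
            (x:ℝ)^(d-1) * ((S:ℝ)+x+1)^(d*k) ≤ ((S:ℝ)+1+x)^(d-1+d*k) := by
          intro x hx
          have h1 : (x:ℝ)^(d-1) ≤ ((S:ℝ)+1+x)^(d-1) :=
            pow_le_pow_left₀ (by positivity)
              (by linarith [Nat.cast_nonneg (α := ℝ) S]) _
          have h2 : ((S:ℝ)+x+1)^(d*k) = ((S:ℝ)+1+x)^(d*k) := by ring_nf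
          rw [h2, pow_add]
          exact mul_le_mul_of_nonneg_right h1 (by positivity)
        calc ∑ x ∈ Finset.range (S+1), (x:ℝ)^(d-1) * ((S:ℝ)+x+1)^(d*k)
            ≤ ∑ x ∈ Finset.range (S+1), ((S:ℝ)+1+x)^(d-1+d*k) :=
              Finset.sum_le_sum hterm
          _ ≤ (2*((S:ℝ)+1))^(d-1+d*k+1) / (((d-1+d*k : ℕ):ℝ)+1) := east_aux_CC (d-1+d*k) S
          _ = (2*((S:ℝ)+1))^(d*(k+1)) / (d*(k+1)) := by
              have e2 : ((d-1+d*k : ℕ):ℝ) + 1 = ((d*(k+1) : ℕ) : ℝ) := by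
                rw [← Nat.cast_add_one, e1]
              rw [e1, e2]
              push_cast
              ring
      calc ∑ x ∈ Finset.range (S+1), (x:ℝ)^(d-1) * (eastC d k * ((S:ℝ)+x+1)^(d*k))
          = eastC d k * ∑ x ∈ Finset.range (S+1), (x:ℝ)^(d-1) * ((S:ℝ)+x+1)^(d*k) := by
            rw [Finset.mul_sum]; apply Finset.sum_congr rfl; intro x _; ring
        _ ≤ eastC d k * ((2*((S:ℝ)+1))^(d*(k+1)) / (d*(k+1))) :=
            mul_le_mul_of_nonneg_left hsum (eastC_nonneg d k)
    have step3 : eastC d k * ((2*((S:ℝ)+1))^(d*(k+1)) / (d*(k+1)))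
        = eastC d (k+1) * ((S:ℝ)+1)^(d*(k+1)) := by
      have hc : eastC d (k+1) = eastC d k * ((2:ℝ)^(d*(k+1)) / ((d:ℝ)*((k:ℝ)+1))) := by
        simp only [eastC]
        rw [Finset.prod_range_succ]
      rw [hc, mul_pow]
      push_cast
      ring
    linarith [step1, step2, step3.symm.le]

/-- Reindexing lemma for sums over initial segments of `Fin`. -/
lemma east_sum_filter_lt_succ (m : ℕ) (x : Fin (m+1) → ℕ) (i : Fin m) :
    ∑ j ∈ Finset.univ.filter (fun j => j < i.succ), x j
      = x 0 + ∑ j ∈ Finset.univ.filter (fun j => j < i), x j.succ := by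
  rw [Finset.sum_filter, Finset.sum_filter, Fin.sum_univ_succ]
  simp [Fin.succ_lt_succ_iff, Fin.succ_pos]

/-- Structural lemma: any admissible family is dominated by the choice-tree sum. -/
lemma east_lemA (d : ℕ) : ∀ (k S : ℕ) (W : Finset (Fin k → ℕ)),
    (∀ y ∈ W, ∀ i : Fin k, y i ≤ S + ∑ j ∈ Finset.univ.filter (fun j => j < i), y j) →
    (∑ y ∈ W, ∏ i, ((y i : ℝ)) ^ (d-1)) ≤ eastG d k S := by
  intro k
  induction k with
  | zero =>
    intro S W _
    have hcard : W.card ≤ 1 :=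
      Finset.card_le_one.mpr (fun a _ b _ => Subsingleton.elim a b)
    simp only [eastG, Finset.univ_eq_empty, Finset.prod_empty]
    rw [Finset.sum_const, nsmul_eq_mul, mul_one]
    exact_mod_cast hcard
  | succ k ih =>
    intro S W hW
    have hmaps : ∀ y ∈ W, y 0 ∈ Finset.range (S+1) := by
      intro y hy
      have h := hW y hy 0
      have hempty : (Finset.univ.filter (fun j : Fin (k+1) => j < 0)) = ∅ := by
        apply Finset.filter_false_of_mem
        intro j _
        exact Fin.not_lt_zero j
      rw [hempty, Finset.sum_empty] at h
      simp only [Finset.mem_range]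
      omega
    rw [← Finset.sum_fiberwise_of_maps_to hmaps]
    show _ ≤ eastG d (k+1) S
    rw [eastG]
    apply Finset.sum_le_sum
    intro x hx
    have expand : ∀ y ∈ W.filter (fun y => y 0 = x),
        ∏ i, ((y i : ℝ))^(d-1) = (x:ℝ)^(d-1) * ∏ i : Fin k, ((y i.succ : ℝ))^(d-1) := by
      intro y hy
      obtain ⟨-, h0⟩ := Finset.mem_filter.mp hy
      rw [Fin.prod_univ_succ, h0]
    rw [Finset.sum_congr rfl expand, ← Finset.mul_sum]
    have hinj : ∀ y1 ∈ W.filter (fun y => y 0 = x), ∀ y2 ∈ W.filter (fun y => y 0 = x),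
        (fun i : Fin k => y1 i.succ) = (fun i : Fin k => y2 i.succ) → y1 = y2 := by
      intro y1 h1 y2 h2 h
      obtain ⟨-, e1⟩ := Finset.mem_filter.mp h1
      obtain ⟨-, e2⟩ := Finset.mem_filter.mp h2
      funext i
      refine Fin.cases ?_ ?_ i
      · rw [e1, e2]
      · intro j
        exact congrFun h j
    have himg : ∑ y ∈ W.filter (fun y => y 0 = x), ∏ i : Fin k, ((y i.succ : ℝ))^(d-1)
        = ∑ z ∈ (W.filter (fun y => y 0 = x)).image (fun y (i : Fin k) => y i.succ),
            ∏ i : Fin k, ((z i : ℝ))^(d-1) := by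
      rw [Finset.sum_image hinj]
    rw [himg]
    apply mul_le_mul_of_nonneg_left _ (by positivity : (0:ℝ) ≤ (x:ℝ)^(d-1))
    apply ih
    intro z hz i
    obtain ⟨y, hy, rfl⟩ := Finset.mem_image.mp hz
    obtain ⟨hyW, hy0⟩ := Finset.mem_filter.mp hy
    have h := hW y hyW i.succ
    rw [east_sum_filter_lt_succ k y i, hy0] at h
    show y i.succ ≤ S + x + ∑ j ∈ Finset.univ.filter (fun j => j < i), y j.succ
    omega

/-- Closed form for the constant. -/
lemma eastC_closed (d n : ℕ) :
    eastC d n * 2^(d*n) = 2 ^ (d * (n * (n + 1) / 2 + n)) / ((n.factorial : ℝ) * (d : ℝ) ^ n) := by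
  have hgauss : ∑ j ∈ Finset.range n, (j+1) = n*(n+1)/2 := by
    have h1 := Finset.sum_range_id_mul_two (n+1)
    have h2 : ∑ i ∈ Finset.range (n+1), i = (∑ j ∈ Finset.range n, (j+1)) + 0 :=
      Finset.sum_range_succ' id n
    rw [h2, Nat.add_sub_cancel, Nat.mul_comm (n+1) n] at h1
    omega
  have hsum : ∑ j ∈ Finset.range n, d*(j+1) = d * (n*(n+1)/2) := by
    rw [← Finset.mul_sum, hgauss]
  have hnum : ∏ j ∈ Finset.range n, (2:ℝ)^(d*(j+1)) = 2^(d*(n*(n+1)/2)) := by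
    rw [Finset.prod_pow_eq_pow_sum, hsum]
  have hden : ∏ j ∈ Finset.range n, ((d:ℝ)*((j:ℝ)+1)) = (d:ℝ)^n * (n.factorial : ℝ) := by
    rw [Finset.prod_mul_distrib, Finset.prod_const, Finset.card_range]
    congr 1
    have := Finset.prod_range_add_one_eq_factorial n
    exact_mod_cast congrArg (Nat.cast (R := ℝ)) this
  have hC : eastC d n = 2^(d*(n*(n+1)/2)) / ((d:ℝ)^n * (n.factorial : ℝ)) := by
    rw [eastC, Finset.prod_div_distrib, hnum, hden]
  rw [hC, div_mul_eq_mul_div, ← pow_add, ← Nat.mul_add, mul_comm ((n.factorial : ℝ)) ((d:ℝ)^n)]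

/-- **entropy bound for the bottleneck counting.** For `d ≥ 1`, `n ≥ 1`
and any finite set `U` of `(n+1)`-tuples of non-negative integers `(x_0,…,x_n)` with
`x_0 = 1` and `x_i ≤ x_0 + … + x_{i-1}` for every `i ≥ 1` (in particular for
`U = U(n+1)` itself), one has, with the convention `0⁰ = 1`:
`Σ_{x ∈ U} (x_0 ⋯ x_n)^{d-1} ≤ 2^{d(n(n+1)/2 + n)} / (n! · dⁿ)`. -/
theorem east_bottleneck_entropy_bound (d n : ℕ) (hd : 1 ≤ d) (hn : 1 ≤ n)
    (U : Finset (Fin (n + 1) → ℕ))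
    (hU : ∀ x ∈ U, x 0 = 1 ∧ ∀ i : Fin (n + 1), i ≠ 0 →
      x i ≤ ∑ j ∈ Finset.univ.filter (fun j => j < i), x j) :
    (∑ x ∈ U, ∏ i, ((x i : ℝ)) ^ (d - 1)) ≤
      2 ^ (d * (n * (n + 1) / 2 + n)) / ((n.factorial : ℝ) * (d : ℝ) ^ n) := by
  -- peel the first coordinate (which is constantly 1)
  have expand : ∀ x ∈ U, ∏ i, ((x i : ℝ))^(d-1)
      = ∏ i : Fin n, ((x i.succ : ℝ))^(d-1) := by
    intro x hx
    rw [Fin.prod_univ_succ, (hU x hx).1]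
    simp
  have hinj : ∀ x1 ∈ U, ∀ x2 ∈ U,
      (fun i : Fin n => x1 i.succ) = (fun i : Fin n => x2 i.succ) → x1 = x2 := by
    intro x1 h1 x2 h2 h
    funext i
    refine Fin.cases ?_ ?_ i
    · rw [(hU x1 h1).1, (hU x2 h2).1]
    · intro j
      exact congrFun h j
  have himg : ∑ x ∈ U, ∏ i, ((x i : ℝ))^(d-1)
      = ∑ z ∈ U.image (fun x (i : Fin n) => x i.succ), ∏ i : Fin n, ((z i : ℝ))^(d-1) := by
    rw [Finset.sum_image hinj]
    exact Finset.sum_congr rfl expand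
  rw [himg]
  have hconstr : ∀ z ∈ U.image (fun x (i : Fin n) => x i.succ), ∀ i : Fin n,
      z i ≤ 1 + ∑ j ∈ Finset.univ.filter (fun j => j < i), z j := by
    intro z hz i
    obtain ⟨x, hx, rfl⟩ := Finset.mem_image.mp hz
    have h := (hU x hx).2 i.succ (Fin.succ_ne_zero i)
    rw [east_sum_filter_lt_succ n x i, (hU x hx).1] at h
    show x i.succ ≤ 1 + ∑ j ∈ Finset.univ.filter (fun j => j < i), x j.succ
    omega
  calc ∑ z ∈ U.image (fun x (i : Fin n) => x i.succ), ∏ i : Fin n, ((z i : ℝ))^(d-1)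
      ≤ eastG d n 1 := east_lemA d n 1 _ hconstr
    _ ≤ eastC d n * (((1:ℕ):ℝ)+1)^(d*n) := eastG_le d hd n 1
    _ = eastC d n * 2^(d*n) := by norm_num
    _ = 2 ^ (d * (n * (n + 1) / 2 + n)) / ((n.factorial : ℝ) * (d : ℝ) ^ n) :=
        eastC_closed d n
end

section
/- (Combinatorics of East-like paths: maximal range of a vacancy with at most m vacancies.) Fix d ≥ 1 and m ≥ 1. (a) For every η ∈ V_m and every x ∈ ℤ_+^d with η_x = 0 one has ‖x − x_*‖₁ + 1 ≤ 2^m − 1, and this bound is attained: there exist η ∈ V_m and x ∈ ℤ_+^d with η_x = 0 and ‖x − x_*‖₁ + 1 = 2^m − 1. (b) For every η ∈ V_m having exactly one vacancy, located at x, one has ‖x − x_*‖₁ + 1 ≤ 2^{m−1}, and there exists such an η attaining equality. -/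
open scoped BigOperators

namespace East

/-- All sites in `V` lie in `ℤ_+^d`. -/
def posCfg (d : ℕ) (V : Finset (Site d)) : Prop := ∀ x ∈ V, ∀ i, 1 ≤ x i

/-- The corner `x_* = (1,…,1)` of `ℤ_+^d`. -/
def xstar (d : ℕ) : Site d := fun _ => 1

/-- A single legal East-like move (with minimal boundary conditions, i.e. a frozen
vacancy at `x_* - e_1`) between vacancy sets `V, W ⊂ ℤ_+^d`, keeping at most `m`
vacancies: the value at some `x ∈ ℤ_+^d` is flipped, `x` being either `x_*` or such that
`x - e_i ∈ ℤ_+^d` is a vacancy of `V` for some `i`. -/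
def legalStep (d m : ℕ) (V W : Finset (Site d)) : Prop :=
  posCfg d V ∧ posCfg d W ∧ V.card ≤ m ∧ W.card ≤ m ∧
  ∃ x : Site d, (∀ i, 1 ≤ x i) ∧
    (x = xstar d ∨ ∃ i : Fin d, (∀ j, 1 ≤ (x - basis d i) j) ∧ (x - basis d i) ∈ V) ∧
    ((x ∈ V ∧ W = V.erase x) ∨ (x ∉ V ∧ W = insert x V))

/-- `V ∈ V_m`: the vacancy set `V` is reachable from the configuration `𝟙` (no
vacancies) by a path of legal East-like moves all of whose configurations have at most
`m` vacancies. -/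
def Vreach (d m : ℕ) (V : Finset (Site d)) : Prop :=
  Relation.ReflTransGen (legalStep d m) ∅ V

section Aux

variable {d : ℕ}

/-- ℓ¹ level of a site. -/
def nv (d : ℕ) (x : Site d) : ℕ := ∑ i, (x i - 1).natAbs

lemma nv_xstar : nv d (xstar d) = 0 := by simp [nv, xstar]

lemma sub_basis_ne (x : Site d) (i : Fin d) : x - basis d i ≠ x := by
  intro h
  have := congrFun h i
  simp [basis] at this

lemma nv_sub_basis {x : Site d} (i : Fin d) (h : ∀ j, 1 ≤ (x - basis d i) j) :
    nv d (x - basis d i) + 1 = nv d x := by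
  have hxi : 2 ≤ x i := by
    have := h i
    simp [basis] at this
    omega
  unfold nv
  rw [← Finset.sum_erase_add _ _ (Finset.mem_univ i),
      ← Finset.sum_erase_add _ _ (Finset.mem_univ i)]
  have h1 : ∀ j ∈ Finset.univ.erase i,
      ((x - basis d i) j - 1).natAbs = (x j - 1).natAbs := by
    intro j hj
    have hne : j ≠ i := Finset.ne_of_mem_erase hj
    simp [basis, hne]
  rw [Finset.sum_congr rfl h1]
  have h2 : (x - basis d i) i = x i - 1 := by simp [basis]
  rw [h2]
  omega

/-- Abstract flip step at level-origin `lo` (allows stuttering). -/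
def flipstep (d lo : ℕ) (V W : Finset (Site d)) : Prop :=
  W = V ∨ ∃ x : Site d, (∀ i, 1 ≤ x i) ∧
    (nv d x = lo ∨ ∃ i : Fin d, (∀ j, 1 ≤ (x - basis d i) j) ∧ (x - basis d i) ∈ V) ∧
    ((x ∈ V ∧ W = V.erase x) ∨ (x ∉ V ∧ W = insert x V))

/-- An indexed legal path with budget `m`, levels `≥ lo`, starting from `∅`. -/
def apath (d lo m : ℕ) (P : ℕ → Finset (Site d)) (T : ℕ) : Prop :=
  P 0 = ∅ ∧ (∀ t, t ≤ T → (P t).card ≤ m ∧ ∀ x ∈ P t, (∀ i, 1 ≤ x i) ∧ lo ≤ nv d x) ∧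
  ∀ t, t < T → flipstep d lo (P t) (P (t+1))

lemma apath_base {lo T : ℕ} {P : ℕ → Finset (Site d)} (hP : apath d lo 1 P T) :
    ∀ t, t ≤ T → ∀ x ∈ P t, nv d x = lo := by
  obtain ⟨h0, hb, hs⟩ := hP
  intro t
  induction t with
  | zero => intro _ x hx; rw [h0] at hx; exact absurd hx (Finset.notMem_empty x)
  | succ n ih =>
    intro hle x hx
    have hn : n < T := by omega
    rcases hs n hn with h | ⟨y, hy, hleg, hflip⟩
    · exact ih (by omega) x (h ▸ hx)
    · rcases hflip with ⟨hyV, hW⟩ | ⟨hyV, hW⟩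
      · exact ih (by omega) x (Finset.mem_of_mem_erase (hW ▸ hx))
      · -- insertion: P n must be empty
        have hcard : (P (n+1)).card ≤ 1 := (hb (n+1) hle).1
        rw [hW, Finset.card_insert_of_notMem hyV] at hcard
        have hPn : P n = ∅ := Finset.card_eq_zero.mp (by omega)
        rcases hleg with h | ⟨i, _, hmem⟩
        · rw [hW, hPn] at hx
          simp at hx
          rw [hx]; exact h
        · rw [hPn] at hmem; exact absurd hmem (Finset.notMem_empty _)
/-- Key lemma: in a budget-`(m+1)` path, whenever the configuration is nonempty it
contains a vacancy at level `< lo + 2^m`. -/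
lemma alpha (m lo : ℕ) (hm : 1 ≤ m)
    (IH : ∀ lo' T' (P' : ℕ → Finset (Site d)), apath d lo' m P' T' →
      ∀ t, t ≤ T' → ∀ x ∈ P' t, nv d x + 2 ≤ lo' + 2 ^ m)
    {T : ℕ} {P : ℕ → Finset (Site d)} (hP : apath d lo (m+1) P T) :
    ∀ t, t ≤ T → (P t).Nonempty → ∃ z ∈ P t, nv d z < lo + 2 ^ m := by
  classical
  have hpow1 : 1 ≤ 2 ^ m := Nat.one_le_two_pow
  obtain ⟨h0, hb, hs⟩ := hP
  by_contra hcon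
  push_neg at hcon
  obtain ⟨t, ht, hne, hall⟩ := hcon
  -- `hall : ∀ z ∈ P t, lo + 2^m ≤ nv z`
  set pred : ℕ → Prop := fun s => s ≤ T ∧ (P s).Nonempty ∧ ∀ z ∈ P s, lo + 2 ^ m ≤ nv d z
    with hpred
  have hex : ∃ s, pred s := ⟨t, ht, hne, hall⟩
  set t₀ := Nat.find hex with ht₀
  obtain ⟨ht₀T, ht₀ne, ht₀all⟩ := Nat.find_spec hex
  rw [← ht₀] at ht₀T ht₀ne ht₀all
  have ht₀pos : 0 < t₀ := by
    rcases Nat.eq_zero_or_pos t₀ with h | h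
    · exfalso; rw [h, h0] at ht₀ne; exact Finset.not_nonempty_empty ht₀ne
    · exact h
  have hmin : ∀ s, s < t₀ → ¬ pred s := fun s hs => Nat.find_min hex hs
  have hstep : flipstep d lo (P (t₀ - 1)) (P t₀) := by
    have := hs (t₀ - 1) (by omega)
    have he : t₀ - 1 + 1 = t₀ := by omega
    rwa [he] at this
  have hVle : t₀ - 1 ≤ T := by omega
  rcases hstep with hstut | ⟨p, hp, hleg, hflip⟩
  · exact hmin (t₀ - 1) (by omega) ⟨hVle, hstut ▸ ht₀ne, fun z hz => ht₀all z (hstut ▸ hz)⟩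
  rcases hflip with ⟨hpV, hW⟩ | ⟨hpV, hW⟩
  swap
  · -- insertion
    rcases Finset.eq_empty_or_nonempty (P (t₀ - 1)) with hemp | hne'
    · rcases hleg with h | ⟨i, _, hmem⟩
      · have : p ∈ P t₀ := by rw [hW]; exact Finset.mem_insert_self _ _
        have := ht₀all p this
        omega
      · rw [hemp] at hmem; exact absurd hmem (Finset.notMem_empty _)
    · refine hmin (t₀ - 1) (by omega) ⟨hVle, hne', fun z hz => ht₀all z ?_⟩
      rw [hW]; exact Finset.mem_insert_of_mem hz
  -- erasure of `p`
  have hVne : (P (t₀ - 1)).Nonempty := ⟨p, hpV⟩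
  have hnotpred := hmin (t₀ - 1) (by omega)
  simp only [hpred] at hnotpred
  push_neg at hnotpred
  obtain ⟨z, hzV, hzlow⟩ := hnotpred hVle hVne
  have hzp : z = p := by
    by_contra hne2
    have : z ∈ P t₀ := by rw [hW]; exact Finset.mem_erase.mpr ⟨hne2, hzV⟩
    have := ht₀all z this
    omega
  subst hzp
  -- every other element of `P (t₀-1)` is high
  have hother : ∀ w ∈ P (t₀ - 1), w ≠ z → lo + 2 ^ m ≤ nv d w := by
    intro w hw hwz
    exact ht₀all w (by rw [hW]; exact Finset.mem_erase.mpr ⟨hwz, hw⟩)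
  -- legality of the flip at `z` forces `nv z = lo`
  have hzlo : nv d z = lo := by
    rcases hleg with h | ⟨i, hposy, hmem⟩
    · exact h
    · exfalso
      have hy := nv_sub_basis i hposy
      have hyne : z - basis d i ≠ z := sub_basis_ne z i
      have := hother _ hmem hyne
      omega
  -- pick a minimal-level element of `P t₀`
  obtain ⟨x, hxW, hxmin⟩ := Finset.exists_min_image (P t₀) (nv d) ht₀ne
  have hxhigh : lo + 2 ^ m ≤ nv d x := ht₀all x hxW
  have hxV : x ∈ P (t₀ - 1) := by rw [hW] at hxW; exact Finset.mem_of_mem_erase hxW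
  set c := nv d x with hc
  -- last insertion time of x
  set u := Nat.findGreatest (fun w => x ∉ P w) (t₀ - 1) with hu
  have hu0 : x ∉ P 0 := by rw [h0]; exact Finset.notMem_empty x
  have huP : x ∉ P u := by
    rw [hu]
    exact @Nat.findGreatest_spec 0 (fun w => x ∉ P w) (fun _ => instDecidableNot) (t₀ - 1)
      (Nat.zero_le _) hu0
  have hule : u ≤ t₀ - 1 := by rw [hu]; exact Nat.findGreatest_le _
  have hune : u ≠ t₀ - 1 := by intro h; rw [h] at huP; exact huP hxV
  have hult : u < t₀ - 1 := lt_of_le_of_ne hule hune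
  have hgt : ∀ w, u < w → w ≤ t₀ - 1 → x ∈ P w := by
    intro w h1 h2
    by_contra h3
    rw [hu] at h1
    exact Nat.findGreatest_is_greatest h1 h2 h3
  have hxu1 : x ∈ P (u+1) := hgt (u+1) (by omega) (by omega)
  -- the step u → u+1 inserts x, with a support y at level c - 1
  have hstepu : flipstep d lo (P u) (P (u+1)) := hs u (by omega)
  obtain ⟨i, hposy, hymem⟩ :
      ∃ i : Fin d, (∀ j, 1 ≤ (x - basis d i) j) ∧ (x - basis d i) ∈ P u := by
    rcases hstepu with hstut | ⟨q, hq, hleg', hflip'⟩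
    · exact absurd (hstut ▸ hxu1) huP
    · rcases hflip' with ⟨hqV, hW'⟩ | ⟨hqV, hW'⟩
      · exact absurd (Finset.mem_of_mem_erase (hW' ▸ hxu1)) huP
      · have hqx : q = x := by
          rw [hW'] at hxu1
          rcases Finset.mem_insert.mp hxu1 with h | h
          · exact h.symm
          · exact absurd h huP
        subst hqx
        rcases hleg' with h | hy
        · omega
        · exact hy
  set y := x - basis d i with hy
  have hynv : nv d y + 1 = c := nv_sub_basis i hposy
  have hyu1 : y ∈ P (u+1) := by
    rcases hstepu with hstut | ⟨q, hq, hleg', hflip'⟩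
    · rw [← hstut] at hymem; exact hymem
    · rcases hflip' with ⟨hqV, hW'⟩ | ⟨hqV, hW'⟩
      · exact absurd (Finset.mem_of_mem_erase (hW' ▸ hxu1)) huP
      · rw [hW']; exact Finset.mem_insert_of_mem hymem
  -- the reversed, low-filtered path
  set Q : ℕ → Finset (Site d) := fun k =>
    if k = 0 then ∅ else (P (t₀ - k)).filter (fun w => nv d w < c) with hQ
  set T' := t₀ - 1 - u with hT'
  have hT'1 : 1 ≤ T' := by omega
  have hQmem : ∀ k, 1 ≤ k → k ≤ T' → x ∈ P (t₀ - k) ∧ t₀ - k ≤ T := by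
    intro k h1 h2
    exact ⟨hgt (t₀ - k) (by omega) (by omega), by omega⟩
  have hQ1 : Q 1 = {z} := by
    simp only [hQ, if_neg (one_ne_zero)]
    ext w
    simp only [Finset.mem_filter, Finset.mem_singleton]
    constructor
    · rintro ⟨hw, hwc⟩
      by_contra hwz
      have hwW : w ∈ P t₀ := by rw [hW]; exact Finset.mem_erase.mpr ⟨hwz, hw⟩
      have := hxmin w hwW
      omega
    · rintro rfl
      exact ⟨hpV, by omega⟩
  have hQpath : apath d lo m Q T' := by
    refine ⟨by simp [hQ], ?_, ?_⟩
    · intro k hk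
      rcases Nat.eq_zero_or_pos k with rfl | hkpos
      · simp [hQ]
      · obtain ⟨hxk, hkT⟩ := hQmem k hkpos hk
        have hsub : Q k ⊆ P (t₀ - k) := by
          simp only [hQ, if_neg (by omega : k ≠ 0)]
          exact Finset.filter_subset _ _
        constructor
        · have hss : Q k ⊂ P (t₀ - k) := by
            rw [Finset.ssubset_def]
            refine ⟨hsub, fun hsup => ?_⟩
            have := hsup hxk
            simp only [hQ, if_neg (by omega : k ≠ 0), Finset.mem_filter] at this
            omega
          have := Finset.card_lt_card hss
          have := (hb (t₀ - k) hkT).1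
          omega
        · intro w hw
          exact (hb (t₀ - k) hkT).2 w (hsub hw)
    · intro k hk
      rcases Nat.eq_zero_or_pos k with rfl | hkpos
      · -- insert z into ∅
        right
        refine ⟨z, ((hb (t₀ - 1) hVle).2 z hpV).1, Or.inl hzlo, Or.inr ⟨?_, ?_⟩⟩
        · simp [hQ]
        · rw [hQ1]; simp [hQ]
      · -- reversed filtered big step
        have hw1 : t₀ - k - 1 < T := by omega
        have hbig := hs (t₀ - k - 1) hw1
        have he : t₀ - k - 1 + 1 = t₀ - k := by omega
        rw [he] at hbig
        have hk0 : k ≠ 0 := by omega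
        have hk10 : k + 1 ≠ 0 := by omega
        have he2 : t₀ - (k + 1) = t₀ - k - 1 := by omega
        have hQk : Q k = (P (t₀ - k)).filter (fun w => nv d w < c) := by
          simp [hQ, hk0]
        have hQk1 : Q (k + 1) = (P (t₀ - k - 1)).filter (fun w => nv d w < c) := by
          simp [hQ, he2]
        rcases hbig with hstut | ⟨q, hq, hleg', hflip'⟩
        · left; rw [hQk, hQk1, hstut]
        · by_cases hqc : nv d q < c
          · -- real reversed flip at q
            right
            refine ⟨q, hq, ?_, ?_⟩
            · rcases hleg' with h | ⟨i, hposi, hmemi⟩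
              · exact Or.inl h
              · refine Or.inr ⟨i, hposi, ?_⟩
                rw [hQk]
                have hnvi := nv_sub_basis i hposi
                have hne2 : q - basis d i ≠ q := sub_basis_ne q i
                refine Finset.mem_filter.mpr ⟨?_, by omega⟩
                rcases hflip' with ⟨hqV, hW'⟩ | ⟨hqV, hW'⟩
                · rw [hW']; exact Finset.mem_erase.mpr ⟨hne2, hmemi⟩
                · rw [hW']; exact Finset.mem_insert_of_mem hmemi
            · rcases hflip' with ⟨hqV, hW'⟩ | ⟨hqV, hW'⟩
              · -- big erase → reversed insert
                right
                constructor
                · rw [hQk, hW']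
                  simp only [Finset.mem_filter, Finset.mem_erase]
                  rintro ⟨⟨h1, _⟩, _⟩
                  exact h1 rfl
                · rw [hQk, hQk1, hW', Finset.filter_erase]
                  rw [Finset.insert_erase]
                  exact Finset.mem_filter.mpr ⟨hqV, hqc⟩
              · -- big insert → reversed erase
                left
                constructor
                · rw [hQk, hW']
                  exact Finset.mem_filter.mpr ⟨Finset.mem_insert_self _ _, hqc⟩
                · rw [hQk, hQk1, hW', Finset.filter_insert, if_pos hqc]
                  rw [Finset.erase_insert]
                  intro hmem2
                  exact hqV (Finset.mem_of_mem_filter _ hmem2)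
          · -- flip outside the filter: stutter
            left
            rw [hQk, hQk1]
            rcases hflip' with ⟨hqV, hW'⟩ | ⟨hqV, hW'⟩
            · rw [hW', Finset.filter_erase, Finset.erase_eq_of_notMem]
              intro hmem2
              exact hqc (Finset.mem_filter.mp hmem2).2
            · rw [hW', Finset.filter_insert, if_neg hqc]
  -- apply the induction hypothesis to y at the end of Q
  have hyQ : y ∈ Q T' := by
    have he3 : t₀ - T' = u + 1 := by omega
    simp only [hQ, if_neg (by omega : T' ≠ 0), he3]
    exact Finset.mem_filter.mpr ⟨hyu1, by omega⟩
  have := IH lo T' Q hQpath T' le_rfl y hyQ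
  omega
lemma Lbound : ∀ m, 1 ≤ m → ∀ lo T (P : ℕ → Finset (Site d)), apath d lo m P T →
    ∀ t, t ≤ T → ∀ x ∈ P t, nv d x + 2 ≤ lo + 2 ^ m := by
  intro m hm
  induction m, hm using Nat.le_induction with
  | base =>
    intro lo T P hP t ht x hx
    have := apath_base hP t ht x hx
    omega
  | succ m hm IH =>
    intro lo T P hP t ht x hx
    classical
    have halpha := alpha m lo hm IH hP
    obtain ⟨h0, hb, hs⟩ := hP
    have hpow : (2:ℕ) ^ (m+1) = 2 ^ m + 2 ^ m := by rw [pow_succ]; omega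
    have hpow1 : 1 ≤ 2 ^ m := Nat.one_le_two_pow
    by_cases hc : nv d x < lo + 2 ^ m
    · omega
    · -- x lies in the high region; use the filtered high path
      set G : ℕ → Finset (Site d) :=
        fun k => (P k).filter (fun w => lo + 2 ^ m ≤ nv d w) with hG
      have hGk : ∀ j, G j = (P j).filter (fun w => lo + 2 ^ m ≤ nv d w) := fun _ => rfl
      have hGpath : apath d (lo + 2 ^ m) m G T := by
        refine ⟨by simp [hG, h0], ?_, ?_⟩
        · intro k hk
          constructor
          · rcases Finset.eq_empty_or_nonempty (G k) with he | hne
            · simp [he]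
            · have hPk : (P k).Nonempty := by
                obtain ⟨w, hw⟩ := hne
                exact ⟨w, Finset.mem_of_mem_filter _ hw⟩
              obtain ⟨z, hz, hzlow⟩ := halpha k hk hPk
              have hss : G k ⊂ P k := by
                rw [Finset.ssubset_def]
                refine ⟨Finset.filter_subset _ _, fun hsup => ?_⟩
                have := Finset.mem_filter.mp (hsup hz)
                omega
              have := Finset.card_lt_card hss
              have := (hb k hk).1
              omega
          · intro w hw
            have hmem := Finset.mem_of_mem_filter _ hw
            have := Finset.mem_filter.mp hw
            exact ⟨((hb k hk).2 w hmem).1, this.2⟩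
        · intro k hk
          rcases hs k hk with hstut | ⟨q, hq, hleg', hflip'⟩
          · left; rw [hGk, hGk, hstut]
          · by_cases hqc : lo + 2 ^ m ≤ nv d q
            · right
              refine ⟨q, hq, ?_, ?_⟩
              · rcases Nat.eq_or_lt_of_le hqc with heq | hlt
                · exact Or.inl heq.symm
                · rcases hleg' with h | ⟨i, hposi, hmemi⟩
                  · omega
                  · refine Or.inr ⟨i, hposi, ?_⟩
                    have hnvi := nv_sub_basis i hposi
                    exact Finset.mem_filter.mpr ⟨hmemi, by omega⟩
              · rcases hflip' with ⟨hqV, hW'⟩ | ⟨hqV, hW'⟩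
                · left
                  refine ⟨Finset.mem_filter.mpr ⟨hqV, hqc⟩, ?_⟩
                  rw [hGk, hGk, hW', Finset.filter_erase]
                · right
                  refine ⟨fun hmem2 => hqV (Finset.mem_of_mem_filter _ hmem2), ?_⟩
                  rw [hGk, hGk, hW', Finset.filter_insert, if_pos hqc]
            · left
              rcases hflip' with ⟨hqV, hW'⟩ | ⟨hqV, hW'⟩
              · rw [hGk, hGk, hW', Finset.filter_erase, Finset.erase_eq_of_notMem]
                intro hmem2
                exact hqc (Finset.mem_filter.mp hmem2).2
              · rw [hGk, hGk, hW', Finset.filter_insert, if_neg hqc]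
      have hxG : x ∈ G t := Finset.mem_filter.mpr ⟨hx, by omega⟩
      have := IH (lo + 2 ^ m) T G hGpath t ht x hxG
      omega
lemma vreach_apath {m : ℕ} {V : Finset (Site d)} (h : Vreach d m V) :
    ∃ T P, apath d 0 m P T ∧ P T = V := by
  induction h with
  | refl => exact ⟨0, fun _ => ∅, ⟨rfl, by simp [apath], by omega⟩, rfl⟩
  | @tail b c hab hbc ih =>
    obtain ⟨T, P, ⟨h0, hbnd, hst⟩, hPT⟩ := ih
    obtain ⟨hpb, hpc, hcb, hcc, x, hx, hleg, hflip⟩ := hbc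
    refine ⟨T+1, fun t => if t ≤ T then P t else c, ⟨?_, ?_, ?_⟩, by simp⟩
    · simp [h0]
    · intro t htle
      by_cases hcase : t ≤ T
      · simp only [if_pos hcase]
        refine ⟨(hbnd t hcase).1, fun w hw => ⟨((hbnd t hcase).2 w hw).1, Nat.zero_le _⟩⟩
      · simp only [if_neg hcase]
        exact ⟨hcc, fun w hw => ⟨hpc w hw, Nat.zero_le _⟩⟩
    · intro t htlt
      by_cases hcase : t < T
      · simp only [if_pos (by omega : t ≤ T), if_pos (by omega : t + 1 ≤ T)]
        exact hst t hcase
      · have ht : t = T := by omega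
        have e1 : (if t ≤ T then P t else c) = b := by
          rw [if_pos (by omega : t ≤ T), ht, hPT]
        have e2 : (if t + 1 ≤ T then P (t+1) else c) = c := by
          rw [if_neg (by omega : ¬ t + 1 ≤ T)]
        show flipstep d 0 (if t ≤ T then P t else c) (if t + 1 ≤ T then P (t+1) else c)
        rw [e1, e2]
        right
        refine ⟨x, hx, ?_, hflip⟩
        rcases hleg with h | h
        · exact Or.inl (by rw [h, nv_xstar])
        · exact Or.inr h
/-- Abstract 1-dimensional East move with budget `m` and horizon `N`. -/
def bstep (m N : ℕ) (A B : Finset ℕ) : Prop :=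
  A.card ≤ m ∧ B.card ≤ m ∧ (∀ a ∈ A, a < N) ∧ (∀ b ∈ B, b < N) ∧
  ∃ n, (n = 0 ∨ ∃ k, k + 1 = n ∧ k ∈ A) ∧
    ((n ∈ A ∧ B = A.erase n) ∨ (n ∉ A ∧ B = insert n A))

def breach (m N : ℕ) (A B : Finset ℕ) : Prop := Relation.ReflTransGen (bstep m N) A B

lemma bstep_symm {m N : ℕ} : Symmetric (bstep m N) := by
  rintro A B ⟨hA, hB, hAN, hBN, n, hleg, hflip⟩
  refine ⟨hB, hA, hBN, hAN, n, ?_, ?_⟩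
  · rcases hleg with h | ⟨k, hk, hkA⟩
    · exact Or.inl h
    · refine Or.inr ⟨k, hk, ?_⟩
      rcases hflip with ⟨hn, hBe⟩ | ⟨hn, hBe⟩
      · rw [hBe]; exact Finset.mem_erase.mpr ⟨by omega, hkA⟩
      · rw [hBe]; exact Finset.mem_insert_of_mem hkA
  · rcases hflip with ⟨hn, hBe⟩ | ⟨hn, hBe⟩
    · refine Or.inr ⟨by rw [hBe]; simp, ?_⟩
      rw [hBe, Finset.insert_erase hn]
    · refine Or.inl ⟨by rw [hBe]; exact Finset.mem_insert_self _ _, ?_⟩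
      rw [hBe, Finset.erase_insert hn]

lemma breach_symm {m N : ℕ} {A B : Finset ℕ} (h : breach m N A B) : breach m N B A :=
  (@Relation.ReflTransGen.symmetric _ _ ⟨bstep_symm⟩).symm _ _ h

lemma breach_mono {m N m' N' : ℕ} (hm : m ≤ m') (hN : N ≤ N') {A B : Finset ℕ}
    (h : breach m N A B) : breach m' N' A B := by
  refine Relation.ReflTransGen.mono ?_ _ _ h
  rintro X Y ⟨h1, h2, h3, h4, n, hleg, hflip⟩
  exact ⟨by omega, by omega, fun a ha => by have := h3 a ha; omega,
    fun b hb => by have := h4 b hb; omega, n, hleg, hflip⟩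

/-- Shift a reach by `t+1`, keeping a pivot vacancy at `t`. -/
lemma breach_shift {m N t : ℕ} {A B : Finset ℕ} (h : breach m N A B) :
    breach (m+1) (t + 1 + N)
      (insert t (A.map (addLeftEmbedding (t+1)))) (insert t (B.map (addLeftEmbedding (t+1)))) := by
  refine Relation.ReflTransGen.lift
    (fun (C : Finset ℕ) => insert t (C.map (addLeftEmbedding (t+1)))) ?_ _ _ h
  rintro X Y ⟨h1, h2, h3, h4, n, hleg, hflip⟩
  have hmemt : ∀ C : Finset ℕ, t ∉ C.map (addLeftEmbedding (t+1)) := by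
    intro C hmem
    obtain ⟨a, _, ha⟩ := Finset.mem_map.mp hmem
    simp [addLeftEmbedding] at ha
    omega
  have hcard : ∀ C : Finset ℕ, (insert t (C.map (addLeftEmbedding (t+1)))).card = C.card + 1 := by
    intro C
    rw [Finset.card_insert_of_notMem (hmemt C), Finset.card_map]
  have hmm : ∀ (a : ℕ), (addLeftEmbedding (t+1)) a = t + 1 + a := fun a => rfl
  refine ⟨by rw [hcard]; omega, by rw [hcard]; omega, ?_, ?_, t + 1 + n, ?_, ?_⟩
  · intro a ha
    rcases Finset.mem_insert.mp ha with rfl | ha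
    · omega
    · obtain ⟨b, hb, hba⟩ := Finset.mem_map.mp ha
      rw [hmm] at hba
      have := h3 b hb
      omega
  · intro a ha
    rcases Finset.mem_insert.mp ha with rfl | ha
    · omega
    · obtain ⟨b, hb, hba⟩ := Finset.mem_map.mp ha
      rw [hmm] at hba
      have := h4 b hb
      omega
  · rcases hleg with rfl | ⟨k, hk, hkA⟩
    · exact Or.inr ⟨t, by omega, Finset.mem_insert_self _ _⟩
    · refine Or.inr ⟨t + 1 + k, by omega, Finset.mem_insert_of_mem ?_⟩
      rw [← hmm]
      exact Finset.mem_map_of_mem _ hkA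
  · have hmemiff : ∀ C : Finset ℕ, t + 1 + n ∈ insert t (C.map (addLeftEmbedding (t+1))) ↔ n ∈ C := by
      intro C
      rw [Finset.mem_insert]
      constructor
      · rintro (h | h)
        · omega
        · obtain ⟨b, hb, hba⟩ := Finset.mem_map.mp h
          rw [hmm] at hba
          have : b = n := by omega
          rwa [← this]
      · intro h
        exact Or.inr (by rw [← hmm]; exact Finset.mem_map_of_mem _ h)
    rcases hflip with ⟨hn, hBe⟩ | ⟨hn, hBe⟩
    · refine Or.inl ⟨(hmemiff X).mpr hn, ?_⟩
      rw [hBe]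
      beta_reduce
      rw [Finset.map_erase, Finset.erase_insert_of_ne (by simp [hmm]; omega), hmm]
    · refine Or.inr ⟨fun hc => hn ((hmemiff X).mp hc), ?_⟩
      rw [hBe]
      beta_reduce
      rw [Finset.map_insert, hmm, Finset.insert_comm]

/-- Add a fixed extra high vacancy throughout a reach. -/
lemma breach_extra {m N h : ℕ} (hh : N ≤ h) {A B : Finset ℕ} (hr : breach m N A B) :
    breach (m+1) (h+1) (insert h A) (insert h B) := by
  refine Relation.ReflTransGen.lift (fun (C : Finset ℕ) => insert h C) ?_ _ _ hr
  rintro X Y ⟨h1, h2, h3, h4, n, hleg, hflip⟩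
  have hX : h ∉ X := fun hc => by have := h3 h hc; omega
  have hY : h ∉ Y := fun hc => by have := h4 h hc; omega
  have hn' : n < N := by
    rcases hflip with ⟨hn, _⟩ | ⟨_, hBe⟩
    · exact h3 n hn
    · exact h4 n (by rw [hBe]; exact Finset.mem_insert_self _ _)
  refine ⟨?_, ?_, ?_, ?_, n, ?_, ?_⟩
  · rw [Finset.card_insert_of_notMem hX]; omega
  · rw [Finset.card_insert_of_notMem hY]; omega
  · intro a ha
    rcases Finset.mem_insert.mp ha with rfl | ha
    · omega
    · have := h3 a ha; omega
  · intro a ha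
    rcases Finset.mem_insert.mp ha with rfl | ha
    · omega
    · have := h4 a ha; omega
  · rcases hleg with rfl | ⟨k, hk, hkA⟩
    · exact Or.inl rfl
    · exact Or.inr ⟨k, hk, Finset.mem_insert_of_mem hkA⟩
  · rcases hflip with ⟨hn, hBe⟩ | ⟨hn, hBe⟩
    · refine Or.inl ⟨Finset.mem_insert_of_mem hn, ?_⟩
      rw [hBe, Finset.erase_insert_of_ne (by omega)]
    · refine Or.inr ⟨?_, ?_⟩
      · intro hc
        rcases Finset.mem_insert.mp hc with rfl | hc
        · omega
        · exact hn hc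
      · rw [hBe, Finset.insert_comm]
lemma Apath' : ∀ k : ℕ, breach (k+1) (2^k) ∅ {2^k - 1} := by
  intro k
  induction k with
  | zero =>
    refine Relation.ReflTransGen.single ?_
    refine ⟨by simp, by simp, by simp, by simp, 0, Or.inl rfl, Or.inr ⟨by simp, by simp⟩⟩
  | succ k IH =>
    have hpk : 1 ≤ 2^k := Nat.one_le_two_pow
    have hpk1 : (2:ℕ)^(k+1) = 2^k + 2^k := by rw [pow_succ]; omega
    set t := 2^k - 1 with htd
    have ht1 : t + 1 = 2^k := by omega
    -- phase 1 : ∅ → {t}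
    have p1 : breach (k+2) (2^(k+1)) ∅ {t} :=
      breach_mono (by omega) (by omega) IH
    -- phase 2 : {t} → {t, 2^(k+1) - 1}
    have p2 : breach (k+2) (2^(k+1)) {t} (insert t {t + 1 + t}) := by
      have := breach_shift (t := t) IH
      rw [Finset.map_empty, (rfl : insert t (∅ : Finset ℕ) = {t}), Finset.map_singleton] at this
      have he : (addLeftEmbedding (t+1)) t = t + 1 + t := rfl
      rw [he] at this
      have hN : t + 1 + 2^k = 2^(k+1) := by omega
      rwa [hN] at this
    -- phase 3 : {t, 2^(k+1) - 1} → {2^(k+1) - 1}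
    have p3 : breach (k+2) (2^(k+1)) (insert t {t + 1 + t}) {t + 1 + t} := by
      have hsymm : breach (k+1) (2^k) {t} ∅ := breach_symm IH
      have := breach_extra (h := t + 1 + t) (by omega) hsymm
      rw [(rfl : insert (t+1+t) (∅ : Finset ℕ) = {t+1+t})] at this
      have he : insert (t+1+t) {t} = insert t {t+1+t} := Finset.pair_comm _ _
      rw [he] at this
      have hN : t + 1 + t + 1 = 2^(k+1) := by omega
      rwa [hN] at this
    have hfin : t + 1 + t = 2^(k+1) - 1 := by omega
    rw [hfin] at p2 p3
    exact (p1.trans p2).trans p3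

lemma Bpath' : ∀ k : ℕ, ∃ A : Finset ℕ, breach (k+1) (2^(k+1)) ∅ A ∧ 2^(k+1) - 2 ∈ A := by
  intro k
  induction k with
  | zero =>
    refine ⟨{0}, breach_mono le_rfl (by norm_num) (Apath' 0), by norm_num⟩
  | succ k IH =>
    obtain ⟨A, hA, hmem⟩ := IH
    have hpk : 1 ≤ 2^(k+1) := Nat.one_le_two_pow
    have hpk1 : (2:ℕ)^(k+2) = 2^(k+1) + 2^(k+1) := by rw [pow_succ]; omega
    set t := 2^(k+1) - 1 with htd
    have ht1 : t + 1 = 2^(k+1) := by omega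
    have p1 : breach (k+2) (2^(k+2)) ∅ {t} :=
      breach_mono (by omega) (by omega) (Apath' (k+1))
    have p2 : breach (k+2) (2^(k+2)) {t}
        (insert t (A.map (addLeftEmbedding (t+1)))) := by
      have := breach_shift (t := t) hA
      rw [Finset.map_empty, (rfl : insert t (∅ : Finset ℕ) = {t})] at this
      have hN : t + 1 + 2^(k+1) = 2^(k+2) := by omega
      rwa [hN] at this
    refine ⟨insert t (A.map (addLeftEmbedding (t+1))), p1.trans p2, ?_⟩
    refine Finset.mem_insert_of_mem ?_
    have he : (2:ℕ)^(k+2) - 2 = (addLeftEmbedding (t+1)) (2^(k+1) - 2) := by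
      have : (addLeftEmbedding (t+1)) (2^(k+1) - 2) = t + 1 + (2^(k+1) - 2) := rfl
      omega
    rw [he]
    exact Finset.mem_map_of_mem _ hmem
/-- Embedding of the 1-dimensional model along the first coordinate axis. -/
def semb (d : ℕ) (hd : 1 ≤ d) : ℕ ↪ Site d :=
  ⟨fun n j => if j = ⟨0, hd⟩ then (n : ℤ) + 1 else 1, by
    intro a b h
    have := congrFun h ⟨0, hd⟩
    simp at this
    exact_mod_cast this⟩

lemma semb_apply (hd : 1 ≤ d) (n : ℕ) (j : Fin d) :
    semb d hd n j = if j = ⟨0, hd⟩ then (n : ℤ) + 1 else 1 := rfl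

lemma semb_pos (hd : 1 ≤ d) (n : ℕ) : ∀ i, 1 ≤ semb d hd n i := by
  intro i
  rw [semb_apply]
  split <;> omega

lemma nv_semb (hd : 1 ≤ d) (n : ℕ) : nv d (semb d hd n) = n := by
  unfold nv
  have h : ∀ j : Fin d, ((semb d hd n) j - 1).natAbs = if j = ⟨0, hd⟩ then n else 0 := by
    intro j
    rw [semb_apply]
    split <;> simp
  rw [Finset.sum_congr rfl (fun j _ => h j)]
  simp

lemma bstep_legal (hd : 1 ≤ d) {m N : ℕ} {A B : Finset ℕ} (h : bstep m N A B) :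
    legalStep d m (A.map (semb d hd)) (B.map (semb d hd)) := by
  obtain ⟨h1, h2, h3, h4, n, hleg, hflip⟩ := h
  have hpos : ∀ (C : Finset ℕ), posCfg d (C.map (semb d hd)) := by
    intro C x hx
    obtain ⟨a, _, rfl⟩ := Finset.mem_map.mp hx
    exact semb_pos hd a
  refine ⟨hpos A, hpos B, by rw [Finset.card_map]; exact h1,
    by rw [Finset.card_map]; exact h2, semb d hd n, semb_pos hd n, ?_, ?_⟩
  · rcases hleg with rfl | ⟨k, hk, hkA⟩
    · left
      funext j
      rw [semb_apply]
      unfold xstar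
      split <;> norm_num
    · right
      refine ⟨⟨0, hd⟩, ?_, ?_⟩
      · have he : semb d hd n - basis d ⟨0, hd⟩ = semb d hd k := by
          funext j
          simp only [Pi.sub_apply, semb_apply, basis]
          by_cases hj : j = ⟨0, hd⟩ <;> simp [hj] <;> omega
        · rw [he]; exact semb_pos hd k
      · have he : semb d hd n - basis d ⟨0, hd⟩ = semb d hd k := by
          funext j
          simp only [Pi.sub_apply, semb_apply, basis]
          by_cases hj : j = ⟨0, hd⟩ <;> simp [hj] <;> omega
        rw [he]
        exact Finset.mem_map_of_mem _ hkA
  · rcases hflip with ⟨hn, hBe⟩ | ⟨hn, hBe⟩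
    · refine Or.inl ⟨Finset.mem_map_of_mem _ hn, ?_⟩
      rw [hBe, Finset.map_erase]
    · refine Or.inr ⟨fun hc => hn ((Finset.mem_map' _).mp hc), ?_⟩
      rw [hBe, Finset.map_insert]

lemma breach_vreach (hd : 1 ≤ d) {m N : ℕ} {A : Finset ℕ} (h : breach m N ∅ A) :
    Vreach d m (A.map (semb d hd)) := by
  have := Relation.ReflTransGen.lift (fun C : Finset ℕ => C.map (semb d hd))
    (fun X Y hXY => bstep_legal hd hXY) _ _ h
  simp only [Function.onFun] at this
  rwa [Finset.map_empty] at this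

end Aux

/-- **combinatorics of East-like paths.**
(a) Every vacancy `x` of every `η ∈ V_m` satisfies `‖x - x_*‖₁ + 1 ≤ 2^m − 1`, and this
bound is attained. (b) If `η ∈ V_m` has exactly one vacancy `x`, then
`‖x - x_*‖₁ + 1 ≤ 2^{m-1}`, and this bound is attained. -/
theorem east_path_combinatorics (d m : ℕ) (hd : 1 ≤ d) (hm : 1 ≤ m) :
    (∀ V : Finset (Site d), Vreach d m V → ∀ x ∈ V,
      (∑ i, (x i - 1).natAbs) + 1 ≤ 2 ^ m - 1) ∧
    (∃ V : Finset (Site d), ∃ x ∈ V, Vreach d m V ∧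
      (∑ i, (x i - 1).natAbs) + 1 = 2 ^ m - 1) ∧
    (∀ V : Finset (Site d), Vreach d m V → V.card = 1 → ∀ x ∈ V,
      (∑ i, (x i - 1).natAbs) + 1 ≤ 2 ^ (m - 1)) ∧
    (∃ x : Site d, Vreach d m {x} ∧ (∑ i, (x i - 1).natAbs) + 1 = 2 ^ (m - 1)) := by
  obtain ⟨k, rfl⟩ : ∃ k, m = k + 1 := ⟨m - 1, by omega⟩
  have hpk : 1 ≤ 2^k := Nat.one_le_two_pow
  have hpk1 : (2:ℕ)^(k+1) = 2^k + 2^k := by rw [pow_succ]; omega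
  refine ⟨?_, ?_, ?_, ?_⟩
  · -- (a) upper bound
    intro V hV x hx
    obtain ⟨T, P, hP, hPT⟩ := vreach_apath hV
    have := Lbound (k+1) (by omega) 0 T P hP T le_rfl x (by rw [hPT]; exact hx)
    unfold nv at this
    omega
  · -- (a) attained
    obtain ⟨A, hA, hmem⟩ := Bpath' k
    refine ⟨A.map (semb d hd), semb d hd (2^(k+1) - 2), Finset.mem_map_of_mem _ hmem,
      breach_vreach hd hA, ?_⟩
    have := nv_semb hd (2^(k+1) - 2)
    unfold nv at this
    omega
  · -- (b) upper bound
    intro V hV hcard x hx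
    obtain ⟨T, P, hP, hPT⟩ := vreach_apath hV
    rcases Nat.eq_zero_or_pos k with rfl | hk
    · have := Lbound 1 le_rfl 0 T P hP T le_rfl x (by rw [hPT]; exact hx)
      unfold nv at this
      simp only [Nat.add_sub_cancel, pow_zero]
      omega
    · have halpha := alpha k 0 hk (fun lo' T' P' hP' => Lbound k hk lo' T' P' hP') hP
      obtain ⟨z, hz, hzlow⟩ := halpha T le_rfl (by rw [hPT]; exact ⟨x, hx⟩)
      rw [hPT] at hz
      obtain ⟨w, hw⟩ := Finset.card_eq_one.mp hcard
      rw [hw, Finset.mem_singleton] at hz hx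
      rw [hz] at hzlow
      rw [← hx] at hzlow
      unfold nv at hzlow
      simp only [Nat.add_sub_cancel]
      omega
  · -- (b) attained
    have hA := Apath' k
    have := breach_vreach hd hA
    rw [Finset.map_singleton] at this
    refine ⟨semb d hd (2^k - 1), this, ?_⟩
    have := nv_semb hd (2^k - 1)
    unfold nv at this
    simp only [Nat.add_sub_cancel]
    omega


end East
end
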